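/- A bounded operator X: H²_U(F_d) → H²_Y(F_d) satisfies S_j^Y X = X S_j^U for all j = 1,...,d (where S_j denotes the right shift) if and only if X = M_S is the left-multiplication operator by some operator-valued formal power series S = Σ_{α∈F_d} s_α z^α with s_α ∈ L(U,Y). -/

import Mathlib

noncomputable section
open scoped ENNReal

/-- The Fock space `H²_Y(F_d)`: square-summable `Y`-valued families indexed by words. -/
abbrev Fock (d : ℕ) (Y : Type*) [NormedAddCommGroup Y] [InnerProductSpace ℂ Y] :=
  lp (fun _ : List (Fin d) => Y) 2

section Aux

variable {d : ℕ} {U Y : Type*}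
  [NormedAddCommGroup U] [InnerProductSpace ℂ U] [CompleteSpace U]
  [NormedAddCommGroup Y] [InnerProductSpace ℂ Y] [CompleteSpace Y]

lemma Fock.single_add (β : List (Fin d)) (a b : U) :
    (lp.single 2 β (a + b) : Fock d U) = lp.single 2 β a + lp.single 2 β b := by
  apply lp.ext
  funext w
  by_cases h : w = β
  · subst h
    simp [lp.single_apply_self]
  · simp [lp.single_apply_ne _ _ _ h]

/-- Evaluation at a word, as a continuous linear map. -/
def Fock.evalCLM (v : List (Fin d)) : Fock d Y →L[ℂ] Y :=
  LinearMap.mkContinuous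
    { toFun := fun f => f v
      map_add' := fun f g => by simp
      map_smul' := fun c f => by simp }
    1
    (fun f => by
      rw [one_mul]; exact lp.norm_apply_le_norm (by norm_num : (2 : ℝ≥0∞) ≠ 0) f v)

@[simp] lemma Fock.evalCLM_apply (v : List (Fin d)) (f : Fock d Y) :
    Fock.evalCLM v f = f v := rfl

/-- `u ↦ lp.single 2 β u`, as a continuous linear map. -/
def Fock.singleCLM (β : List (Fin d)) : U →L[ℂ] Fock d U :=
  LinearMap.mkContinuous
    { toFun := fun u => lp.single 2 β u
      map_add' := fun a b => Fock.single_add β a b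
      map_smul' := fun c a => by simpa using lp.single_smul 2 β a c }
    1
    (fun u => by
      have : ‖(lp.single 2 β u : Fock d U)‖ = ‖u‖ :=
        lp.norm_single (E := fun _ : List (Fin d) => U) (p := 2) (by norm_num : (0 : ℝ≥0∞) < 2) β u
      simp [this])

@[simp] lemma Fock.singleCLM_apply (β : List (Fin d)) (u : U) :
    (Fock.singleCLM β u : Fock d U) = lp.single 2 β u := by rfl

/-- The symbol coefficients of an operator `X`. -/
def Fock.coeff (X : Fock d U →L[ℂ] Fock d Y) (α : List (Fin d)) : U →L[ℂ] Y :=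
  (Fock.evalCLM α).comp (X.comp (Fock.singleCLM []))

lemma Fock.coeff_apply (X : Fock d U →L[ℂ] Fock d Y) (α : List (Fin d)) (u : U) :
    Fock.coeff X α u = X (lp.single 2 [] u) α := by rfl

end Aux

/-- a bounded operator `X : H²_U(F_d) → H²_Y(F_d)` intertwines the right
shifts (`S_j^Y X = X S_j^U` for all `j`) if and only if `X = M_S` is left multiplication
by an operator-valued formal power series `S = Σ_α s_α z^α`, i.e. for all `f` and `v`,
`(X f)_v = Σ_{αβ = v} s_α f_β`. -/
theorem intertwiner_iff_multiplier {d : ℕ} {U Y : Type*}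
    [NormedAddCommGroup U] [InnerProductSpace ℂ U] [CompleteSpace U]
    [NormedAddCommGroup Y] [InnerProductSpace ℂ Y] [CompleteSpace Y]
    (SU : Fin d → Fock d U →L[ℂ] Fock d U)
    (hSU : ∀ (j : Fin d) (f : Fock d U) (v : List (Fin d)), (SU j f) (v ++ [j]) = f v)
    (hSU0 : ∀ (j : Fin d) (f : Fock d U) (w : List (Fin d)),
      (∀ v : List (Fin d), w ≠ v ++ [j]) → (SU j f) w = 0)
    (SY : Fin d → Fock d Y →L[ℂ] Fock d Y)
    (hSY : ∀ (j : Fin d) (f : Fock d Y) (v : List (Fin d)), (SY j f) (v ++ [j]) = f v)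
    (hSY0 : ∀ (j : Fin d) (f : Fock d Y) (w : List (Fin d)),
      (∀ v : List (Fin d), w ≠ v ++ [j]) → (SY j f) w = 0)
    (X : Fock d U →L[ℂ] Fock d Y) :
    (∀ j : Fin d, (SY j).comp X = X.comp (SU j)) ↔
    ∃ s : List (Fin d) → (U →L[ℂ] Y),
      ∀ (f : Fock d U) (v : List (Fin d)),
        (X f) v = ∑ i ∈ Finset.range (v.length + 1), s (v.take i) (f (v.drop i)) := by
  constructor
  · -- forward direction: intertwiner implies multiplier
    intro hcomm
    refine ⟨Fock.coeff X, ?_⟩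
    -- the action of `SU j` on single elements
    have hsingle : ∀ (j : Fin d) (β : List (Fin d)) (u : U),
        (lp.single 2 (β ++ [j]) u : Fock d U) = SU j (lp.single 2 β u) := by
      intro j β u
      apply lp.ext
      funext w
      by_cases h : ∃ v : List (Fin d), w = v ++ [j]
      · obtain ⟨v, rfl⟩ := h
        rw [hSU j _ v]
        by_cases hv : v = β
        · subst hv
          simp [lp.single_apply_self]
        · have hne : v ++ [j] ≠ β ++ [j] := by
            intro hc
            exact hv (by simpa using List.append_left_inj [j] |>.mp hc)
          rw [lp.single_apply_ne _ _ _ hne, lp.single_apply_ne _ _ _ hv]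
      · push_neg at h
        rw [hSU0 j _ w h]
        have hne : w ≠ β ++ [j] := h β
        rw [lp.single_apply_ne _ _ _ hne]
    -- key structural lemma on singles
    have key : ∀ β : List (Fin d),
        (∀ (u : U) (w : List (Fin d)), (∀ α : List (Fin d), w ≠ α ++ β) →
          (X (lp.single 2 β u)) w = 0) ∧
        (∀ (u : U) (α : List (Fin d)),
          (X (lp.single 2 β u)) (α ++ β) = Fock.coeff X α u) := by
      intro β
      induction β using List.reverseRecOn with
      | nil =>
        constructor
        · intro u w hw
          exact absurd (List.append_nil w).symm (hw w)
        · intro u α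
          rw [List.append_nil]
          rfl
      | append_singleton β j ih =>
        have hX : ∀ u : U, X (lp.single 2 (β ++ [j]) u) = SY j (X (lp.single 2 β u)) := by
          intro u
          rw [hsingle j β u]
          have := congrArg (fun T : Fock d U →L[ℂ] Fock d Y => T (lp.single 2 β u)) (hcomm j)
          exact this.symm
        constructor
        · intro u w hw
          rw [hX u]
          by_cases h : ∃ v : List (Fin d), w = v ++ [j]
          · obtain ⟨v, rfl⟩ := h
            rw [hSY j _ v]
            apply (ih.1 u v)
            intro α hα
            exact hw α (by rw [hα, List.append_assoc])
          · push_neg at h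
            exact hSY0 j _ w h
        · intro u α
          rw [hX u, ← List.append_assoc, hSY j _ (α ++ β)]
          exact ih.2 u α
      -- end key
    intro f v
    -- decompose f as a sum of singles and push through X and evaluation
    have h1 : HasSum (fun β : List (Fin d) => (lp.single 2 β (f β) : Fock d U)) f :=
      lp.hasSum_single (by norm_num) f
    have h2 : HasSum (fun β : List (Fin d) => X (lp.single 2 β (f β))) (X f) :=
      h1.mapL X
    have h3 : HasSum (fun β : List (Fin d) => (X (lp.single 2 β (f β))) v) ((X f) v) := by
      have := h2.mapL (Fock.evalCLM v)
      simpa using this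
    set T : Finset (List (Fin d)) := (Finset.range (v.length + 1)).image v.drop with hT
    have h4 : HasSum (fun β : List (Fin d) => (X (lp.single 2 β (f β))) v)
        (∑ β ∈ T, (X (lp.single 2 β (f β))) v) := by
      apply hasSum_sum_of_ne_finset_zero
      intro β hβ
      apply (key β).1
      intro α hα
      apply hβ
      rw [hT]
      apply Finset.mem_image.mpr
      refine ⟨α.length, ?_, ?_⟩
      · apply Finset.mem_range.mpr
        have : α.length ≤ v.length := by
          rw [hα]; simp
        omega
      · rw [hα, List.drop_left]
    have h5 : (∑ β ∈ T, (X (lp.single 2 β (f β))) v) =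
        ∑ i ∈ Finset.range (v.length + 1), Fock.coeff X (v.take i) (f (v.drop i)) := by
      rw [hT, Finset.sum_image]
      · apply Finset.sum_congr rfl
        intro i hi
        have := (key (v.drop i)).2 (f (v.drop i)) (v.take i)
        rw [List.take_append_drop] at this
        rw [this]
      · intro i hi k hk h
        have hi' : i ≤ v.length := by
          have := Finset.mem_range.mp hi; omega
        have hk' : k ≤ v.length := by
          have := Finset.mem_range.mp hk; omega
        have := congrArg List.length h
        simp [List.length_drop] at this
        omega
    exact h3.unique (h5 ▸ h4)
  · -- backward direction: multiplier implies intertwiner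
    rintro ⟨s, hs⟩ j
    apply ContinuousLinearMap.ext
    intro f
    apply lp.ext
    funext w
    have goal_eq : (SY j (X f)) w = (X (SU j f)) w → True := fun _ => trivial
    show (SY j (X f)) w = (X (SU j f)) w
    rcases List.eq_nil_or_concat' w with rfl | ⟨v, j', rfl⟩
    · rw [hSY0 j (X f) [] (fun v => by simp), hs (SU j f) []]
      have h0 : (SU j f) [] = 0 := hSU0 j f [] (fun v => by simp)
      simp [h0]
    · by_cases hj : j' = j
      · rw [hj]
        rw [hSY j (X f) v, hs f v, hs (SU j f) (v ++ [j])]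
        have hlen : (v ++ [j]).length = v.length + 1 := by simp
        rw [hlen]
        conv_rhs => rw [Finset.sum_range_succ]
        have hlast : (SU j f) ((v ++ [j]).drop (v.length + 1)) = 0 := by
          have : (v ++ [j]).drop (v.length + 1) = [] := by
            apply List.drop_eq_nil_of_le
            simp
          rw [this]
          exact hSU0 j f [] (fun v => by simp)
        rw [hlast, map_zero, add_zero]
        apply Finset.sum_congr rfl
        intro i hi
        have hi' : i ≤ v.length := by
          have := Finset.mem_range.mp hi; omega
        rw [List.take_append_of_le_length hi', List.drop_append_of_le_length hi',
          hSU j f (v.drop i)]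
      · have hne : ∀ α : List (Fin d), v ++ [j'] ≠ α ++ [j] := by
          intro α hc
          apply hj
          have := congrArg List.getLast? hc
          rw [List.getLast?_concat, List.getLast?_concat] at this
          exact Option.some.inj this
        rw [hSY0 j (X f) (v ++ [j']) hne, hs (SU j f) (v ++ [j'])]
        apply (Finset.sum_eq_zero _).symm
        intro i hi
        have hi2 : i ≤ v.length + 1 := by
          have := Finset.mem_range.mp hi
          simp at this
          omega
        by_cases hi' : i ≤ v.length
        · rw [List.drop_append_of_le_length hi']
          have h0 : (SU j f) (v.drop i ++ [j']) = 0 := by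
            apply hSU0
            intro α hc
            apply hj
            have := congrArg List.getLast? hc
            rw [List.getLast?_concat, List.getLast?_concat] at this
            exact Option.some.inj this
          rw [h0, map_zero]
        · have : i = v.length + 1 := by omega
          subst this
          have hd : (v ++ [j']).drop (v.length + 1) = [] := by
            apply List.drop_eq_nil_of_le
            simp
          rw [hd]
          have h0 : (SU j f) [] = 0 := hSU0 j f [] (fun v => by simp)
          rw [h0, map_zero]
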